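/- Let d be a squarefree integer with d ≠ 0, 1, let p > 3 be a prime, and let a, b be integers. Then Im((a + b√d)^p) = 0 if and only if b = 0. Equivalently, writing p = 2m + 1, the sum Σ_{k=0}^{m} C(p, 2k+1) a^{p−(2k+1)} b^{2k+1} d^k vanishes if and only if b = 0. -/

import Mathlib

open Finset Polynomial

lemma split_sum (m : ℕ) (f : ℕ → ℂ) :
    ∑ j ∈ range (2 * m + 2), f j =
      (∑ k ∈ range (m + 1), f (2 * k)) + ∑ k ∈ range (m + 1), f (2 * k + 1) := by
  induction m with
  | zero => simp [Finset.sum_range_succ]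
  | succ n ih =>
      rw [show 2 * (n + 1) + 2 = (2 * n + 2) + 1 + 1 by ring, Finset.sum_range_succ,
        Finset.sum_range_succ, Finset.sum_range_succ (f := fun k => f (2 * k)),
        Finset.sum_range_succ (f := fun k => f (2 * k + 1)), ih]
      ring_nf

lemma key_id (m : ℕ) (x y : ℂ) :
    (x + y) ^ (2 * m + 1) - (x - y) ^ (2 * m + 1) =
      2 * ∑ k ∈ range (m + 1),
        ((2 * m + 1).choose (2 * k + 1) : ℂ) * x ^ (2 * m + 1 - (2 * k + 1)) * y ^ (2 * k + 1) := by
  have h1 : (x + y) ^ (2 * m + 1) = ∑ k ∈ range (2 * m + 2),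
      y ^ k * x ^ (2 * m + 1 - k) * ((2 * m + 1).choose k : ℂ) := by
    rw [show x + y = y + x by ring, add_pow]
  have h2 : (x - y) ^ (2 * m + 1) = ∑ k ∈ range (2 * m + 2),
      (-y) ^ k * x ^ (2 * m + 1 - k) * ((2 * m + 1).choose k : ℂ) := by
    rw [show x - y = -y + x by ring, add_pow]
  rw [h1, h2, ← Finset.sum_sub_distrib, split_sum m
    (fun k => y ^ k * x ^ (2*m+1-k) * ((2*m+1).choose k : ℂ)
      - (-y) ^ k * x ^ (2*m+1-k) * ((2*m+1).choose k : ℂ)), Finset.mul_sum]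
  have he : ∀ k ∈ range (m+1), (y ^ (2*k) * x ^ (2*m+1-(2*k)) * ((2*m+1).choose (2*k) : ℂ)
      - (-y) ^ (2*k) * x ^ (2*m+1-(2*k)) * ((2*m+1).choose (2*k) : ℂ)) = 0 := by
    intro k _
    rw [show (-y) ^ (2*k) = y ^ (2*k) by rw [neg_pow, Even.neg_one_pow ⟨k, by ring⟩, one_mul]]
    ring
  rw [Finset.sum_congr rfl he, Finset.sum_const_zero, zero_add]
  apply Finset.sum_congr rfl
  intro k _
  rw [show (-y) ^ (2*k+1) = -(y ^ (2*k+1)) by rw [neg_pow, Odd.neg_one_pow ⟨k, by ring⟩]; ring]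
  ring



/-- Let `d` be a squarefree integer with `d ≠ 0, 1`, let `p > 3` be a prime, and let `a, b`
be integers.  Writing `p = 2m + 1`, the imaginary part of `(a + b√d)^p`, namely the sum
`Σ_{k=0}^{m} C(p, 2k+1) a^(p−(2k+1)) b^(2k+1) d^k`, vanishes if and only if `b = 0`. -/
theorem stmt_6 (d : ℤ) (hd : Squarefree d) (hd0 : d ≠ 0) (hd1 : d ≠ 1)
    (p : ℕ) (hp : p.Prime) (hp3 : 3 < p) (a b : ℤ) :
    (∑ k ∈ Finset.range ((p - 1) / 2 + 1),
        (p.choose (2 * k + 1) : ℤ) * a ^ (p - (2 * k + 1)) * b ^ (2 * k + 1) * d ^ k) = 0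
      ↔ b = 0 := by
  obtain ⟨m, hm⟩ := hp.odd_of_ne_two (by omega)
  have hm2 : (p - 1) / 2 = m := by omega
  constructor
  · intro hS
    by_contra hb
    -- choose a complex square root of d
    obtain ⟨s, hs⟩ := IsAlgClosed.exists_pow_nat_eq (d : ℂ) (n := 2) (by norm_num)
    have hs0 : s ≠ 0 := by
      intro h
      rw [h] at hs
      simp only [ne_eq, zero_pow, OfNat.ofNat_ne_zero, not_false_eq_true] at hs
      exact hd0 (by exact_mod_cast hs.symm)
    -- irrationality of s : if x + y s = 0 with x y integers then y = 0
    have hirr : ∀ x y : ℤ, (x : ℂ) + y * s = 0 → y = 0 := by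
      intro x y h
      by_contra hy
      have h1 : (y : ℂ) * s = -(x : ℂ) := by linear_combination h
      have h2 : (y : ℂ) ^ 2 * d = (x : ℂ) ^ 2 := by
        rw [← hs]; linear_combination ((y : ℂ) * s - x) * h1
      have h3 : y ^ 2 * d = x ^ 2 := by exact_mod_cast h2
      have h4 : y ^ 2 ∣ x ^ 2 := ⟨d, h3.symm⟩
      obtain ⟨t, rfl⟩ := (Int.pow_dvd_pow_iff two_ne_zero).mp h4
      have h5 : d = t ^ 2 := by
        have := mul_left_cancel₀ (pow_ne_zero 2 hy) (by linarith [h3] : y ^ 2 * d = y ^ 2 * t ^ 2)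
        exact this
      have h6 : IsUnit t := hd t ⟨1, by rw [h5]; ring⟩
      rcases Int.isUnit_iff.mp h6 with rfl | rfl <;> simp_all
    -- the two conjugate elements
    set u : ℂ := (a : ℂ) + b * s with hu_def
    set v : ℂ := (a : ℂ) - b * s with hv_def
    have hu : u ≠ 0 := fun h => hb (hirr a b h)
    have hv : v ≠ 0 := by
      intro h
      have : (a : ℂ) + (-b : ℤ) * s = 0 := by push_cast; rw [← h, hv_def]; ring
      exact hb (by simpa using hirr a (-b) this)
    -- from the vanishing sum, u^p = v^p
    have hSC : (∑ k ∈ Finset.range (m + 1),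
        (p.choose (2 * k + 1) : ℂ) * (a : ℂ) ^ (p - (2 * k + 1)) * (b : ℂ) ^ (2 * k + 1)
          * (d : ℂ) ^ k) = 0 := by
      rw [hm2] at hS
      exact_mod_cast congrArg (Int.cast : ℤ → ℂ) hS
    have huv : u ^ p = v ^ p := by
      have hkey := key_id m (a : ℂ) ((b : ℂ) * s)
      rw [← hm] at hkey
      have hterm : ∀ k ∈ Finset.range (m + 1),
          ((p.choose (2 * k + 1) : ℂ) * (a : ℂ) ^ (p - (2 * k + 1)) * ((b : ℂ) * s) ^ (2 * k + 1))
            = s * ((p.choose (2 * k + 1) : ℂ) * (a : ℂ) ^ (p - (2 * k + 1))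
                * (b : ℂ) ^ (2 * k + 1) * (d : ℂ) ^ k) := by
        intro k _
        have hsk : s ^ (2 * k + 1) = (d : ℂ) ^ k * s := by
          rw [pow_succ, pow_mul, hs]
        have : ((b : ℂ) * s) ^ (2 * k + 1) = (b : ℂ) ^ (2 * k + 1) * (d : ℂ) ^ k * s := by
          rw [mul_pow, hsk]; ring
        rw [this]; ring
      rw [Finset.sum_congr rfl hterm, ← Finset.mul_sum, hSC] at hkey
      have : u ^ p - v ^ p = 0 := by rw [hu_def, hv_def, hkey]; ring
      exact sub_eq_zero.mp this
    -- the ratio ζ = u / v is a p-th root of unity, not equal to 1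
    set ζ : ℂ := u / v with hz_def
    have hzp : ζ ^ p = 1 := by
      rw [hz_def, div_pow, huv, div_self (pow_ne_zero p hv)]
    have hz1 : ζ ≠ 1 := by
      intro h
      have huv1 : u = v := by
        exact (div_eq_one_iff_eq hv).mp h
      have : (b : ℂ) * s = 0 := by
        have := sub_eq_zero.mpr huv1
        rw [hu_def, hv_def] at this
        linear_combination this / 2
      rcases mul_eq_zero.mp this with h | h
      · exact hb (Int.cast_eq_zero.mp h)
      · exact hs0 h
    -- ζ satisfies a monic quadratic with rational coefficients
    set N : ℤ := a ^ 2 - d * b ^ 2 with hN_def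
    set M : ℤ := 2 * a ^ 2 + 2 * d * b ^ 2 with hM_def
    have hNuv : (N : ℂ) = u * v := by
      rw [hN_def, hu_def, hv_def]; push_cast; rw [← hs]; ring
    have hMuv : (M : ℂ) = u ^ 2 + v ^ 2 := by
      rw [hM_def, hu_def, hv_def]; push_cast; rw [← hs]; ring
    have hN0 : (N : ℂ) ≠ 0 := by rw [hNuv]; exact mul_ne_zero hu hv
    set t : ℚ := (M : ℚ) / (N : ℚ) with ht_def
    have htC : (t : ℂ) = (M : ℂ) / (N : ℂ) := by push_cast [ht_def]; ring
    set P : Polynomial ℚ := Polynomial.X ^ 2 - Polynomial.C t * Polynomial.X + 1 with hP_def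
    have hPmonic : P.Monic := by
      rw [hP_def]
      monicity!
    have haev : Polynomial.aeval ζ P = 0 := by
      rw [hP_def]
      simp only [map_add, map_sub, map_mul, map_pow, map_one, Polynomial.aeval_X,
        Polynomial.aeval_C]
      have halg : (algebraMap ℚ ℂ) t = (t : ℂ) := rfl
      rw [halg, htC, hz_def]
      have hNC : (N : ℂ) = (a : ℂ) ^ 2 - s ^ 2 * (b : ℂ) ^ 2 := by
        rw [hN_def]; push_cast [← hs]; ring
      have hMC : (M : ℂ) = 2 * (a : ℂ) ^ 2 + 2 * s ^ 2 * (b : ℂ) ^ 2 := by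
        rw [hM_def]; push_cast [← hs]; ring
      field_simp
      rw [hNC, hMC]
      ring
    -- ζ is a primitive p-th root of unity
    have hord : orderOf ζ = p := by
      rcases (Nat.Prime.eq_one_or_self_of_dvd hp _ (orderOf_dvd_of_pow_eq_one hzp)) with h | h
      · exact absurd (orderOf_eq_one_iff.mp h) hz1
      · exact h
    have hprim : IsPrimitiveRoot ζ p := hord ▸ IsPrimitiveRoot.orderOf ζ
    have hcyc := Polynomial.cyclotomic_eq_minpoly_rat hprim hp.pos
    have hdvd : minpoly ℚ ζ ∣ P := minpoly.dvd ℚ ζ haev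
    have hdeg1 : (minpoly ℚ ζ).natDegree = p - 1 := by
      rw [← hcyc, Polynomial.natDegree_cyclotomic, Nat.totient_prime hp]
    have hPdeg : P.natDegree = 2 := by
      rw [hP_def]
      compute_degree!
    have hle : (minpoly ℚ ζ).natDegree ≤ 2 := by
      rw [← hPdeg]
      exact Polynomial.natDegree_le_of_dvd hdvd hPmonic.ne_zero
    omega
  · intro hb
    simp [hb]
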